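/- Let C be a small H-enriched category (H cartesian closed, locally presentable) and F a class of weighted colimits in C. Then the full subcategory C̄ = [C^op, H]_F of F-limit-preserving enriched presheaves is reflective in the presheaf category [C^op, H]: the inclusion C̄ → [C^op, H] has a left adjoint. Consequently C̄ is complete and cocomplete. -/

import Mathlib

open CategoryTheory Limits Opposite Cardinal

universe u
section
variable {C : Type u} [SmallCategory C] {ι : Type u} {K : ι → Type u} [∀ i, SmallCategory (K i)]
  {D : ∀ i, K i ⥤ C} {c : ∀ i, Cocone (D i)}

/-- Concrete characterization of the predicate. -/
theorem my_pred_iff (P : Cᵒᵖ ⥤ Type u) :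
    (∀ i, Nonempty (IsLimit (P.mapCone (c i).op))) ↔
    ∀ i, ∀ s ∈ ((D i).op ⋙ P).sections, ∃! x : P.obj (op (c i).pt),
      ∀ k : (K i)ᵒᵖ, P.map (((c i).ι.app k.unop).op) x = s k := by
  refine forall_congr' fun i => ?_
  rw [Types.isLimit_iff]
  rfl

theorem my_closed (J : Type u) [SmallCategory J] :
    ObjectProperty.IsClosedUnderLimitsOfShape
      (fun P : Cᵒᵖ ⥤ Type u => ∀ i, Nonempty (IsLimit (P.mapCone (c i).op))) J := by
  suffices H : ∀ {F : J ⥤ Cᵒᵖ ⥤ Type u} {cn : Cone F} (hcn : IsLimit cn),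
      (∀ j, ∀ i, Nonempty (IsLimit ((F.obj j).mapCone (c i).op))) →
      ∀ i, Nonempty (IsLimit (cn.pt.mapCone (c i).op)) by
    constructor
    rintro X ⟨p⟩
    exact H p.isLimit p.prop_diag_obj
  intro F cn hcn hF
  have hF' : ∀ j, ∀ i, ∀ s ∈ ((D i).op ⋙ F.obj j).sections,
      ∃! x : (F.obj j).obj (op (c i).pt),
        ∀ k : (K i)ᵒᵖ, (F.obj j).map (((c i).ι.app k.unop).op) x = s k :=
    fun j => (my_pred_iff (F.obj j)).1 (hF j)
  rw [my_pred_iff]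
  -- pointwise limit cones
  have ptlim : ∀ x : Cᵒᵖ, Nonempty (IsLimit (((evaluation Cᵒᵖ (Type u)).obj x).mapCone cn)) :=
    fun x => ⟨isLimitOfPreserves _ hcn⟩
  have ptiff : ∀ x : Cᵒᵖ,
      ∀ s ∈ (F ⋙ (evaluation Cᵒᵖ (Type u)).obj x).sections,
        ∃! a : cn.pt.obj x, ∀ j, (cn.π.app j).app x a = s j := by
    intro x
    have := (Types.isLimit_iff (((evaluation Cᵒᵖ (Type u)).obj x).mapCone cn)).1 (ptlim x)
    exact this
  have inj : ∀ (x : Cᵒᵖ) (a b : cn.pt.obj x),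
      (∀ j, (cn.π.app j).app x a = (cn.π.app j).app x b) → a = b := by
    intro x a b h
    have hsec : (fun j => (cn.π.app j).app x b) ∈ (F ⋙ (evaluation Cᵒᵖ (Type u)).obj x).sections := by
      intro j j' f
      exact ConcreteCategory.congr_hom (congr_app (cn.w f) x) b
    obtain ⟨u, -, huniq⟩ := ptiff x _ hsec
    exact (huniq a h).trans (huniq b fun j => rfl).symm
  intro i s hs
  set g : ∀ k : (K i)ᵒᵖ, op (c i).pt ⟶ op ((D i).obj k.unop) :=
    fun k => ((c i).ι.app k.unop).op with hg
  -- sections at each j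
  have hsj : ∀ j : J, (fun k => (cn.π.app j).app _ (s k)) ∈ ((D i).op ⋙ F.obj j).sections := by
    intro j k k' f
    show (F.obj j).map ((D i).op.map f) ((cn.π.app j).app _ (s k)) = _
    have := ConcreteCategory.congr_hom ((cn.π.app j).naturality ((D i).op.map f)) (s k)
    dsimp at this ⊢
    rw [← this]
    exact congrArg _ (hs f)
  choose xj hxj huxj using fun j => hF' j i _ (hsj j)
  -- compatibility of xj over J
  have hcomp : ∀ {j j'} (f : j ⟶ j'), (F.map f).app (op (c i).pt) (xj j) = xj j' := by
    intro j j' f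
    refine huxj j' _ fun k => ?_
    have n1 : (F.obj j').map (g k) ((F.map f).app _ (xj j)) =
        (F.map f).app _ ((F.obj j).map (g k) (xj j)) :=
      (ConcreteCategory.congr_hom ((F.map f).naturality (g k)) (xj j)).symm
    rw [n1, hxj j k]
    exact ConcreteCategory.congr_hom (congr_app (cn.w f) (op ((D i).obj k.unop))) (s k)
  obtain ⟨a, ha, -⟩ := ptiff (op (c i).pt) xj hcomp
  refine ⟨a, fun k => ?_, fun b hb => ?_⟩
  · refine inj _ _ _ fun j => ?_
    have n1 : (cn.π.app j).app _ (cn.pt.map (g k) a) =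
        (F.obj j).map (g k) ((cn.π.app j).app _ a) :=
      ConcreteCategory.congr_hom ((cn.π.app j).naturality (g k)) a
    rw [n1, ha j, hxj j k]
    rfl
  · refine inj _ _ _ fun j => ?_
    rw [ha j]
    refine huxj j _ fun k => ?_
    have n1 : (F.obj j).map (g k) ((cn.π.app j).app _ b) =
        (cn.π.app j).app _ (cn.pt.map (g k) b) :=
      (ConcreteCategory.congr_hom ((cn.π.app j).naturality (g k)) b).symm
    rw [n1, hb k]
    rfl
end


section Closure
variable {C : Type u} [SmallCategory C] {ι : Type u} {K : ι → Type u} [∀ i, SmallCategory (K i)]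
  {D : ∀ i, K i ⥤ C} {c : ∀ i, Cocone (D i)}
  (A B : Cᵒᵖ ⥤ Type u) (h : A ⟶ B)
  (hB : ∀ i, ∀ s ∈ ((D i).op ⋙ B).sections, ∃! x : B.obj (op (c i).pt),
      ∀ k : (K i)ᵒᵖ, B.map (((c i).ι.app k.unop).op) x = s k)

/-- The chosen lift of a compatible family. -/
noncomputable def theLift (i : ι) (s : ∀ k : (K i)ᵒᵖ, ((D i).op ⋙ B).obj k)
    (hs : s ∈ ((D i).op ⋙ B).sections) : B.obj (op (c i).pt) :=
  (hB i s hs).exists.choose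

theorem theLift_spec (i : ι) (s : ∀ k : (K i)ᵒᵖ, ((D i).op ⋙ B).obj k)
    (hs : s ∈ ((D i).op ⋙ B).sections) :
    ∀ k : (K i)ᵒᵖ, B.map (((c i).ι.app k.unop).op) (theLift B hB i s hs) = s k :=
  (hB i s hs).exists.choose_spec

/-- One step of the closure. -/
noncomputable def step (S : Set (Σ x : Cᵒᵖ, B.obj x)) : Set (Σ x : Cᵒᵖ, B.obj x) :=
  S ∪ Set.range (fun p : Σ x : Cᵒᵖ, A.obj x => (⟨p.1, h.app p.1 p.2⟩ : Σ x : Cᵒᵖ, B.obj x))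
    ∪ (⋃ q : Σ y x : Cᵒᵖ, y ⟶ x,
        (fun b : B.obj q.1 => (⟨q.2.1, B.map q.2.2 b⟩ : Σ x : Cᵒᵖ, B.obj x)) ''
          {b : B.obj q.1 | (⟨q.1, b⟩ : Σ x : Cᵒᵖ, B.obj x) ∈ S})
    ∪ (⋃ i : ι, ⋃ q : Σ x : Cᵒᵖ, (op (c i).pt ⟶ x),
        Set.range (fun s : {s : ∀ k : (K i)ᵒᵖ, ((D i).op ⋙ B).obj k //
            s ∈ ((D i).op ⋙ B).sections ∧
            ∀ k : (K i)ᵒᵖ, (⟨(D i).op.obj k, s k⟩ : Σ x : Cᵒᵖ, B.obj x) ∈ S} =>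
          (⟨q.1, B.map q.2 (theLift B hB i s.1 s.2.1)⟩ : Σ x : Cᵒᵖ, B.obj x)))

theorem subset_step (S : Set (Σ x : Cᵒᵖ, B.obj x)) : S ⊆ step A B h hB S := by
  unfold step
  exact fun _ hp => Set.mem_union_left _ (Set.mem_union_left _ (Set.mem_union_left _ hp))

theorem mem_step_h (S : Set (Σ x : Cᵒᵖ, B.obj x)) (x : Cᵒᵖ) (a : A.obj x) :
    (⟨x, h.app x a⟩ : Σ x : Cᵒᵖ, B.obj x) ∈ step A B h hB S := by
  unfold step
  exact Set.mem_union_left _ (Set.mem_union_left _ (Set.mem_union_right _ ⟨⟨x, a⟩, rfl⟩))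

theorem mem_step_map (S : Set (Σ x : Cᵒᵖ, B.obj x)) {y : Cᵒᵖ} {b : B.obj y}
    (hb : (⟨y, b⟩ : Σ x : Cᵒᵖ, B.obj x) ∈ S) {x : Cᵒᵖ} (f : y ⟶ x) :
    (⟨x, B.map f b⟩ : Σ x : Cᵒᵖ, B.obj x) ∈ step A B h hB S := by
  unfold step
  exact Set.mem_union_left _ (Set.mem_union_right _
    (Set.mem_iUnion.2 ⟨⟨y, x, f⟩, Set.mem_image_of_mem _ hb⟩))

theorem mem_step_lift (S : Set (Σ x : Cᵒᵖ, B.obj x)) (i : ι)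
    (s : ∀ k : (K i)ᵒᵖ, ((D i).op ⋙ B).obj k) (hs : s ∈ ((D i).op ⋙ B).sections)
    (hsS : ∀ k : (K i)ᵒᵖ, (⟨(D i).op.obj k, s k⟩ : Σ x : Cᵒᵖ, B.obj x) ∈ S)
    {x : Cᵒᵖ} (f : op (c i).pt ⟶ x) :
    (⟨x, B.map f (theLift B hB i s hs)⟩ : Σ x : Cᵒᵖ, B.obj x) ∈ step A B h hB S := by
  unfold step
  exact Set.mem_union_right _
    (Set.mem_iUnion.2 ⟨i, Set.mem_iUnion.2 ⟨⟨x, f⟩, ⟨⟨s, hs, hsS⟩, rfl⟩⟩⟩)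

theorem step_mono {S S' : Set (Σ x : Cᵒᵖ, B.obj x)} (hSS : S ⊆ S') :
    step A B h hB S ⊆ step A B h hB S' := by
  rintro p hp
  unfold step at hp
  rcases hp with ((hp | hp) | hp) | hp
  · exact subset_step A B h hB S' (hSS hp)
  · obtain ⟨⟨x, a⟩, rfl⟩ := hp
    exact mem_step_h A B h hB S' x a
  · obtain ⟨t, ht⟩ := Set.mem_iUnion.1 hp
    obtain ⟨b, hb, rfl⟩ := ht
    exact mem_step_map A B h hB S' (hSS hb) t.2.2
  · obtain ⟨i, hi⟩ := Set.mem_iUnion.1 hp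
    obtain ⟨q, hq⟩ := Set.mem_iUnion.1 hi
    obtain ⟨⟨s, hs, hsS⟩, rfl⟩ := hq
    exact mem_step_lift A B h hB S' i s hs (fun k => hSS (hsS k)) q.2

/-- Transfinite iteration of `step`. -/
noncomputable def stage (o : Ordinal.{u}) : Set (Σ x : Cᵒᵖ, B.obj x) :=
  step A B h hB (⋃ o' : Set.Iio o, stage o'.1)
termination_by o
decreasing_by exact o'.2


theorem stage_def (o : Ordinal.{u}) :
    stage A B h hB o = step A B h hB (⋃ o' : Set.Iio o, stage A B h hB o'.1) := by
  rw [stage]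

theorem stage_mono {o₁ o₂ : Ordinal.{u}} (hoo : o₁ ≤ o₂) :
    stage A B h hB o₁ ⊆ stage A B h hB o₂ := by
  rcases eq_or_lt_of_le hoo with rfl | hlt
  · exact le_rfl
  · rw [stage_def A B h hB o₂]
    refine subset_trans ?_ (subset_step A B h hB _)
    exact Set.subset_iUnion (fun o' : Set.Iio o₂ => stage A B h hB o'.1) ⟨o₁, hlt⟩


/-! ### Cardinal bounds -/

/-- A big type bounding the sizes of all relevant data. -/
def BigType (C : Type u) [SmallCategory C] (ι : Type u) (K : ι → Type u)
    [∀ i, SmallCategory (K i)] (A : Cᵒᵖ ⥤ Type u) : Type u :=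
  ((Σ x : Cᵒᵖ, A.obj x) ⊕ (Σ i : ι, K i)) ⊕ ((Σ y : Cᵒᵖ, Σ x : Cᵒᵖ, y ⟶ x) ⊕ (ι ⊕ ℕ))

end Closure

section Bound
variable {C : Type u} [SmallCategory C] {ι : Type u} {K : ι → Type u} [∀ i, SmallCategory (K i)]
  {D : ∀ i, K i ⥤ C} {c : ∀ i, Cocone (D i)}
  (A B : Cᵒᵖ ⥤ Type u) (h : A ⟶ B)
  (hB : ∀ i, ∀ s ∈ ((D i).op ⋙ B).sections, ∃! x : B.obj (op (c i).pt),
      ∀ k : (K i)ᵒᵖ, B.map (((c i).ι.app k.unop).op) x = s k)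

theorem hnu_inf : ℵ₀ ≤ #(BigType C ι K A) := by
  have : Infinite (BigType C ι K A) := by unfold BigType; infer_instance
  exact Cardinal.aleph0_le_mk _

theorem htheta_inf : ℵ₀ ≤ (2 : Cardinal.{u}) ^ #(BigType C ι K A) :=
  (hnu_inf (K := K) A).trans (Cardinal.cantor _).le

theorem hnu_le_theta : #(BigType C ι K A) ≤ (2 : Cardinal.{u}) ^ #(BigType C ι K A) :=
  (Cardinal.cantor _).le

theorem hmk1 : #(Σ x : Cᵒᵖ, A.obj x) ≤ #(BigType C ι K A) := by
  refine Cardinal.mk_le_of_injective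
    (f := fun p => (Sum.inl (Sum.inl p) : BigType C ι K A)) fun a b hab => ?_
  unfold BigType at hab
  simpa using hab

theorem hmk3 : #(Σ y : Cᵒᵖ, Σ x : Cᵒᵖ, y ⟶ x) ≤ #(BigType C ι K A) := by
  refine Cardinal.mk_le_of_injective
    (f := fun p => (Sum.inr (Sum.inl p) : BigType C ι K A)) fun a b hab => ?_
  unfold BigType at hab
  simpa using hab

theorem hmk4 : #ι ≤ #(BigType C ι K A) := by
  refine Cardinal.mk_le_of_injective
    (f := fun i => (Sum.inr (Sum.inr (Sum.inl i)) : BigType C ι K A)) fun a b hab => ?_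
  unfold BigType at hab
  simpa using hab

theorem hmkK (i : ι) : #(K i)ᵒᵖ ≤ #(BigType C ι K A) := by
  refine Cardinal.mk_le_of_injective
    (f := fun k => (Sum.inl (Sum.inr ⟨i, k.unop⟩) : BigType C ι K A)) fun a b hab => ?_
  unfold BigType at hab
  simp only [Sum.inl.injEq, Sum.inr.injEq] at hab
  exact unop_injective (sigma_mk_injective hab)

theorem hmkArr (z : Cᵒᵖ) : #(Σ x : Cᵒᵖ, (z ⟶ x)) ≤ #(BigType C ι K A) := by
  refine le_trans ?_ (hmk3 (K := K) A)
  refine Cardinal.mk_le_of_injective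
    (f := fun p => (⟨z, p.1, p.2⟩ : Σ y : Cᵒᵖ, Σ x : Cᵒᵖ, y ⟶ x)) fun a b hab => ?_
  have := sigma_mk_injective hab
  cases a; cases b
  simpa using this

theorem htheta_mul : (2 : Cardinal.{u}) ^ #(BigType C ι K A) * 2 ^ #(BigType C ι K A) ≤
    2 ^ #(BigType C ι K A) :=
  (Cardinal.mul_eq_self (htheta_inf (K := K) A)).le

theorem htheta_add : (2 : Cardinal.{u}) ^ #(BigType C ι K A) + 2 ^ #(BigType C ι K A) ≤
    2 ^ #(BigType C ι K A) :=
  (Cardinal.add_eq_self (htheta_inf (K := K) A)).le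

theorem hpow {κi : Cardinal.{u}} (hκi : κi ≤ #(BigType C ι K A)) :
    ((2 : Cardinal.{u}) ^ #(BigType C ι K A)) ^ κi ≤ 2 ^ #(BigType C ι K A) := by
  calc ((2 : Cardinal.{u}) ^ #(BigType C ι K A)) ^ κi
      ≤ ((2 : Cardinal.{u}) ^ #(BigType C ι K A)) ^ #(BigType C ι K A) :=
        Cardinal.power_le_power_left (Cardinal.power_ne_zero _ two_ne_zero) hκi
  _ = 2 ^ (#(BigType C ι K A) * #(BigType C ι K A)) := (Cardinal.power_mul).symm
  _ = 2 ^ #(BigType C ι K A) := by rw [Cardinal.mul_eq_self (hnu_inf (K := K) A)]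

/-- union bound helper -/
theorem my_iUnion_le {α β : Type u} (f : β → Set α) (b : Cardinal.{u})
    (hb : ∀ i, #(f i) ≤ b) : #(⋃ i, f i) ≤ #β * b := by
  rcases isEmpty_or_nonempty β with hβ | hβ
  · rw [Set.iUnion_of_empty]
    simp
  · exact (Cardinal.mk_iUnion_le f).trans (mul_le_mul_right (ciSup_le' hb) _)

theorem mk_fiber_le (S : Set (Σ x : Cᵒᵖ, B.obj x)) (y : Cᵒᵖ) :
    #{b : B.obj y | (⟨y, b⟩ : Σ x : Cᵒᵖ, B.obj x) ∈ S} ≤ #S := by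
  refine Cardinal.mk_le_of_injective
    (f := fun b => (⟨⟨y, b.1⟩, b.2⟩ : ↥S)) fun a b hab => ?_
  apply Subtype.ext
  exact sigma_mk_injective (congrArg Subtype.val hab)

theorem mk_step_le (S : Set (Σ x : Cᵒᵖ, B.obj x))
    (hS : #S ≤ 2 ^ #(BigType C ι K A)) :
    #(step A B h hB S) ≤ 2 ^ #(BigType C ι K A) := by
  set θ : Cardinal.{u} := 2 ^ #(BigType C ι K A) with hθdef
  have hθθ := htheta_mul (K := K) A
  have hθa := htheta_add (K := K) A
  have hνθ := hnu_le_theta (K := K) A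
  have hR : #(Set.range (fun p : Σ x : Cᵒᵖ, A.obj x =>
      (⟨p.1, h.app p.1 p.2⟩ : Σ x : Cᵒᵖ, B.obj x))) ≤ θ :=
    Cardinal.mk_range_le.trans ((hmk1 (ι := ι) (K := K) A).trans hνθ)
  have hM : #(⋃ q : Σ y : Cᵒᵖ, Σ x : Cᵒᵖ, y ⟶ x,
      (fun b : B.obj q.1 => (⟨q.2.1, B.map q.2.2 b⟩ : Σ x : Cᵒᵖ, B.obj x)) ''
        {b : B.obj q.1 | (⟨q.1, b⟩ : Σ x : Cᵒᵖ, B.obj x) ∈ S}) ≤ θ := by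
    refine le_trans (my_iUnion_le _ θ fun q => ?_) ?_
    · exact Cardinal.mk_image_le.trans ((mk_fiber_le B S q.1).trans hS)
    · exact le_trans (mul_le_mul' ((hmk3 (K := K) A).trans hνθ) le_rfl) hθθ
  have hL : #(⋃ i : ι, ⋃ q : Σ x : Cᵒᵖ, (op (c i).pt ⟶ x),
      Set.range (fun s : {s : ∀ k : (K i)ᵒᵖ, ((D i).op ⋙ B).obj k //
          s ∈ ((D i).op ⋙ B).sections ∧
          ∀ k : (K i)ᵒᵖ, (⟨(D i).op.obj k, s k⟩ : Σ x : Cᵒᵖ, B.obj x) ∈ S} =>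
        (⟨q.1, B.map q.2 (theLift B hB i s.1 s.2.1)⟩ : Σ x : Cᵒᵖ, B.obj x))) ≤ θ := by
    refine le_trans (my_iUnion_le _ θ fun i => ?_) ?_
    · refine le_trans (my_iUnion_le _ θ fun q => ?_) ?_
      · refine Cardinal.mk_range_le.trans ?_
        have hsub : #{s : ∀ k : (K i)ᵒᵖ, ((D i).op ⋙ B).obj k //
            s ∈ ((D i).op ⋙ B).sections ∧
            ∀ k : (K i)ᵒᵖ, (⟨(D i).op.obj k, s k⟩ : Σ x : Cᵒᵖ, B.obj x) ∈ S} ≤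
            #((K i)ᵒᵖ → ↥S) := by
          refine Cardinal.mk_le_of_injective
            (f := fun s => fun k => (⟨⟨(D i).op.obj k, s.1 k⟩, s.2.2 k⟩ : ↥S)) ?_
          intro a b hab
          apply Subtype.ext
          funext k
          have := congr_fun hab k
          have h2 : (⟨(D i).op.obj k, a.1 k⟩ : Σ x : Cᵒᵖ, B.obj x) =
              ⟨(D i).op.obj k, b.1 k⟩ := congrArg Subtype.val this
          exact sigma_mk_injective (β := fun x : Cᵒᵖ => B.obj x) h2
        refine hsub.trans ?_
        rw [← Cardinal.power_def]
        calc #↥S ^ #(K i)ᵒᵖ ≤ θ ^ #(K i)ᵒᵖ := Cardinal.power_le_power_right hS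
        _ ≤ θ := hpow A (hmkK A i)
      · exact le_trans (mul_le_mul' ((hmkArr (ι := ι) (K := K) A _).trans hνθ) le_rfl) hθθ
    · exact le_trans (mul_le_mul' ((hmk4 (C := C) (K := K) A).trans hνθ) le_rfl) hθθ
  unfold step
  refine le_trans (Cardinal.mk_union_le _ _) ?_
  refine le_trans (add_le_add (le_trans (Cardinal.mk_union_le _ _)
    (add_le_add (Cardinal.mk_union_le _ _) le_rfl)) le_rfl) ?_
  refine le_trans (add_le_add (add_le_add (add_le_add hS hR) hM) hL) ?_
  exact le_trans (add_le_add (le_trans (add_le_add hθa le_rfl) hθa) le_rfl) hθa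


theorem mk_stage_le (o : Ordinal.{u})
    (ho : o < (Order.succ ((2 : Cardinal.{u}) ^ #(BigType C ι K A))).ord) :
    #(stage A B h hB o) ≤ 2 ^ #(BigType C ι K A) := by
  induction o using Ordinal.induction with
  | _ o IH =>
  rw [stage_def]
  refine mk_step_le A B h hB _ ?_
  have hsurj : Function.Surjective
      (fun t : o.ToType => ((Ordinal.ToType.mk (o := o)).symm t : Set.Iio o)) :=
    (Ordinal.ToType.mk (o := o)).symm.surjective
  rw [← hsurj.iUnion_comp (fun o' : Set.Iio o => stage A B h hB o'.1)]
  refine le_trans (my_iUnion_le _ (2 ^ #(BigType C ι K A)) fun t => ?_) ?_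
  · have hlt : (((Ordinal.ToType.mk (o := o)).symm t : Set.Iio o) : Ordinal.{u}) < o :=
      ((Ordinal.ToType.mk (o := o)).symm t).2
    exact IH _ hlt (hlt.trans ho)
  · refine le_trans (mul_le_mul' ?_ le_rfl) (htheta_mul (K := K) A)
    rw [Cardinal.mk_toType]
    have := (Cardinal.lt_ord.1 ho)
    exact (Order.lt_succ_iff.1 this)

end Bound

section Limit
variable {C : Type u} [SmallCategory C] {ι : Type u} {K : ι → Type u} [∀ i, SmallCategory (K i)]
  {D : ∀ i, K i ⥤ C} {c : ∀ i, Cocone (D i)}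
  (A B : Cᵒᵖ ⥤ Type u) (h : A ⟶ B)
  (hB : ∀ i, ∀ s ∈ ((D i).op ⋙ B).sections, ∃! x : B.obj (op (c i).pt),
      ∀ k : (K i)ᵒᵖ, B.map (((c i).ι.app k.unop).op) x = s k)

/-- the regular cardinal used for the closure length -/
noncomputable def bigK (C : Type u) [SmallCategory C] (ι : Type u) (K : ι → Type u)
    [∀ i, SmallCategory (K i)] (A : Cᵒᵖ ⥤ Type u) : Cardinal.{u} :=
  Order.succ ((2 : Cardinal.{u}) ^ #(BigType C ι K A))

theorem bigK_inf : ℵ₀ ≤ bigK C ι K A :=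
  (htheta_inf (K := K) A).trans (Order.le_succ _)

theorem bigK_reg : (bigK C ι K A).IsRegular :=
  Cardinal.isRegular_succ (htheta_inf (K := K) A)

theorem bigL_isLimit : Order.IsSuccLimit ((bigK C ι K A).ord) :=
  Cardinal.isSuccLimit_ord (bigK_inf (K := K) A)

theorem bigL_toType_nonempty : Nonempty ((bigK C ι K A).ord).ToType := by
  rw [Ordinal.toType_nonempty_iff_ne_zero]
  intro h0
  have := congrArg Ordinal.card h0
  rw [Cardinal.card_ord] at this
  simp only [Ordinal.card_zero] at this
  exact ((Cardinal.aleph0_pos.trans_le (bigK_inf (K := K) A)).ne' this).elim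

/-- the ordinal below `Λ` attached to `t : Λ.toType` -/
noncomputable def ordOf (t : ((bigK C ι K A).ord).ToType) : Ordinal.{u} :=
  ((Ordinal.ToType.mk (o := (bigK C ι K A).ord)).symm t : Set.Iio ((bigK C ι K A).ord))

theorem ordOf_lt (t : ((bigK C ι K A).ord).ToType) : ordOf A t < (bigK C ι K A).ord :=
  ((Ordinal.ToType.mk (o := (bigK C ι K A).ord)).symm t).2

theorem ordOf_surj (o : Ordinal.{u}) (ho : o < (bigK C ι K A).ord) :
    ∃ t : ((bigK C ι K A).ord).ToType, ordOf A t = o := by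
  refine ⟨Ordinal.ToType.mk ⟨o, ho⟩, ?_⟩
  unfold ordOf
  rw [OrderIso.symm_apply_apply]

/-- The closure: union of all stages below `Λ`. -/
noncomputable def limitStage : Set (Σ x : Cᵒᵖ, B.obj x) :=
  ⋃ t : ((bigK C ι K A).ord).ToType, stage A B h hB (ordOf A t)

theorem mk_limitStage_le : #(limitStage A B h hB) ≤ bigK C ι K A := by
  refine le_trans (my_iUnion_le _ (2 ^ #(BigType C ι K A)) fun t => ?_) ?_
  · exact mk_stage_le A B h hB _ (ordOf_lt A t)
  · rw [Cardinal.mk_toType, Cardinal.card_ord]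
    exact le_trans (mul_le_mul' le_rfl (Order.le_succ _))
      (Cardinal.mul_eq_self (bigK_inf (K := K) A)).le

theorem stage_subset_limitStage {o : Ordinal.{u}} (ho : o < (bigK C ι K A).ord) :
    stage A B h hB o ⊆ limitStage A B h hB := by
  obtain ⟨t, ht⟩ := ordOf_surj (K := K) A o ho
  rw [← ht]
  exact Set.subset_iUnion (fun t => stage A B h hB (ordOf A t)) t

theorem mem_limitStage_h (x : Cᵒᵖ) (a : A.obj x) :
    (⟨x, h.app x a⟩ : Σ x : Cᵒᵖ, B.obj x) ∈ limitStage A B h hB := by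
  obtain ⟨t⟩ := bigL_toType_nonempty (K := K) A
  refine stage_subset_limitStage A B h hB (ordOf_lt A t) ?_
  rw [stage_def]
  exact mem_step_h A B h hB _ x a

theorem mem_limitStage_map {y : Cᵒᵖ} {b : B.obj y}
    (hb : (⟨y, b⟩ : Σ x : Cᵒᵖ, B.obj x) ∈ limitStage A B h hB) {x : Cᵒᵖ} (f : y ⟶ x) :
    (⟨x, B.map f b⟩ : Σ x : Cᵒᵖ, B.obj x) ∈ limitStage A B h hB := by
  obtain ⟨Ts, ⟨t, rfl⟩, hmem⟩ := hb
  have hsucc : Order.succ (ordOf A t) < (bigK C ι K A).ord :=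
    (bigL_isLimit (K := K) A).succ_lt (ordOf_lt A t)
  refine stage_subset_limitStage A B h hB hsucc ?_
  rw [stage_def]
  refine mem_step_map A B h hB _ ?_ f
  exact Set.mem_iUnion.2 ⟨⟨ordOf A t, Set.mem_Iio.2 (Order.lt_succ _)⟩, hmem⟩

theorem mem_limitStage_lift (i : ι)
    (s : ∀ k : (K i)ᵒᵖ, ((D i).op ⋙ B).obj k) (hs : s ∈ ((D i).op ⋙ B).sections)
    (hsS : ∀ k : (K i)ᵒᵖ, (⟨(D i).op.obj k, s k⟩ : Σ x : Cᵒᵖ, B.obj x) ∈ limitStage A B h hB)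
    {x : Cᵒᵖ} (f : op (c i).pt ⟶ x) :
    (⟨x, B.map f (theLift B hB i s hs)⟩ : Σ x : Cᵒᵖ, B.obj x) ∈ limitStage A B h hB := by
  have hc : ∀ k : (K i)ᵒᵖ, ∃ t : ((bigK C ι K A).ord).ToType,
      (⟨(D i).op.obj k, s k⟩ : Σ x : Cᵒᵖ, B.obj x) ∈ stage A B h hB (ordOf A t) := by
    intro k
    exact Set.mem_iUnion.1 (hsS k)
  choose t ht using hc
  set o : Ordinal.{u} := iSup (fun k => Order.succ (ordOf A (t k))) with hodef
  have hoΛ : o < (bigK C ι K A).ord := by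
    refine Cardinal.iSup_lt_ord_of_isRegular (bigK_reg (K := K) A) ?_ ?_
    · exact lt_of_le_of_lt (hmkK A i) (lt_of_le_of_lt (hnu_le_theta (K := K) A)
        (Order.lt_succ _))
    · intro k
      exact (bigL_isLimit (K := K) A).succ_lt (ordOf_lt A (t k))
  have hklt : ∀ k, ordOf A (t k) < o := by
    intro k
    refine lt_of_lt_of_le (Order.lt_succ _) ?_
    exact Ordinal.le_iSup (fun k => Order.succ (ordOf A (t k))) k
  refine stage_subset_limitStage A B h hB hoΛ ?_
  rw [stage_def]
  refine mem_step_lift A B h hB _ i s hs ?_ f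
  intro k
  exact Set.mem_iUnion.2 ⟨⟨ordOf A (t k), Set.mem_Iio.2 (hklt k)⟩, ht k⟩


/-- The closure as a presheaf. -/
noncomputable def ClosF : Cᵒᵖ ⥤ Type u where
  obj x := {b : B.obj x // (⟨x, b⟩ : Σ x : Cᵒᵖ, B.obj x) ∈ limitStage A B h hB}
  map {x y} f := TypeCat.ofHom fun b => ⟨B.map f b.1, mem_limitStage_map A B h hB b.2 f⟩
  map_id x := by
    refine ConcreteCategory.hom_ext _ _ fun b => ?_
    apply Subtype.ext
    simp
  map_comp f g := by
    refine ConcreteCategory.hom_ext _ _ fun b => ?_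
    apply Subtype.ext
    simp

noncomputable def toClos : A ⟶ ClosF A B h hB where
  app x := TypeCat.ofHom fun a => ⟨h.app x a, mem_limitStage_h A B h hB x a⟩
  naturality x y f := by
    refine ConcreteCategory.hom_ext _ _ fun a => ?_
    apply Subtype.ext
    exact ConcreteCategory.congr_hom (h.naturality f) a

noncomputable def fromClos : ClosF A B h hB ⟶ B where
  app x := TypeCat.ofHom fun b => b.1
  naturality x y f := rfl

theorem toClos_fromClos : toClos A B h hB ≫ fromClos A B h hB = h := rfl

theorem closF_pred : ∀ i, ∀ s ∈ ((D i).op ⋙ ClosF A B h hB).sections,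
    ∃! x : (ClosF A B h hB).obj (op (c i).pt),
      ∀ k : (K i)ᵒᵖ, (ClosF A B h hB).map (((c i).ι.app k.unop).op) x = s k := by
  intro i s hs
  set s' : ∀ k : (K i)ᵒᵖ, ((D i).op ⋙ B).obj k := fun k => (s k).1 with hs'def
  have hs' : s' ∈ ((D i).op ⋙ B).sections := by
    intro k k' f
    exact congrArg Subtype.val (hs f)
  have hmem : (⟨op (c i).pt, theLift B hB i s' hs'⟩ : Σ x : Cᵒᵖ, B.obj x) ∈
      limitStage A B h hB := by
    have := mem_limitStage_lift A B h hB i s' hs'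
      (fun k => (s k).2) (𝟙 (op (c i).pt))
    rwa [FunctorToTypes.map_id_apply] at this
  obtain ⟨xB, hxB, huniqB⟩ := hB i s' hs'
  refine ⟨⟨theLift B hB i s' hs', hmem⟩, fun k => ?_, fun y hy => ?_⟩
  · apply Subtype.ext
    exact theLift_spec B hB i s' hs' k
  · apply Subtype.ext
    have h1 : y.1 = xB := huniqB y.1 (fun k => congrArg Subtype.val (hy k))
    have h2 : theLift B hB i s' hs' = xB := huniqB _ (theLift_spec B hB i s' hs')
    exact h1.trans h2.symm

theorem mk_closF_le : #(Σ x : Cᵒᵖ, (ClosF A B h hB).obj x) ≤ bigK C ι K A := by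
  refine le_trans (le_of_eq (Cardinal.mk_congr ?_)) (mk_limitStage_le A B h hB)
  exact
    { toFun := fun p => ⟨⟨p.1, p.2.1⟩, p.2.2⟩
      invFun := fun q => ⟨q.1.1, q.1.2, q.2⟩
      left_inv := fun p => rfl
      right_inv := fun q => rfl }

end Limit

section Package
variable (C : Type u) [SmallCategory C] (ι : Type u) (K : ι → Type u) [∀ i, SmallCategory (K i)]
  (A : Cᵒᵖ ⥤ Type u)

/-- data describing a presheaf carried by subsets of a fixed universe type,
together with a morphism from `A`. -/
structure SolIndex where
  so : Cᵒᵖ → Set ((bigK C ι K A).out)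
  sm : ∀ (x y : Cᵒᵖ), (x ⟶ y) → ↥(so x) → ↥(so y)
  sm_id : ∀ x, sm x x (𝟙 x) = id
  sm_comp : ∀ (x y z : Cᵒᵖ) (f : x ⟶ y) (g : y ⟶ z), sm x z (f ≫ g) = sm y z g ∘ sm x y f
  tapp : ∀ x : Cᵒᵖ, A.obj x → ↥(so x)
  tnat : ∀ (x y : Cᵒᵖ) (f : x ⟶ y) (a : A.obj x), sm x y f (tapp x a) = tapp y (A.map f a)

variable {C ι K A}

/-- the presheaf attached to an index datum. -/
def SolIndex.toFunctor (q : SolIndex C ι K A) : Cᵒᵖ ⥤ Type u where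
  obj x := ↥(q.so x)
  map {x y} f := TypeCat.ofHom (q.sm x y f)
  map_id x := by refine ConcreteCategory.hom_ext _ _ fun a => ?_; exact congr_fun (q.sm_id x) a
  map_comp {x y z} f g := by refine ConcreteCategory.hom_ext _ _ fun a => ?_; exact congr_fun (q.sm_comp x y z f g) a

/-- the morphism from `A` attached to an index datum. -/
def SolIndex.toHom (q : SolIndex C ι K A) : A ⟶ q.toFunctor where
  app x := TypeCat.ofHom (q.tapp x)
  naturality x y f := by
    refine ConcreteCategory.hom_ext _ _ fun a => ?_
    exact (q.tnat x y f a).symm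

end Package

section Construct
variable {C : Type u} [SmallCategory C] {ι : Type u} {K : ι → Type u} [∀ i, SmallCategory (K i)]
  {D : ∀ i, K i ⥤ C} {c : ∀ i, Cocone (D i)}
  (A B : Cᵒᵖ ⥤ Type u) (h : A ⟶ B)
  (hB : ∀ i, ∀ s ∈ ((D i).op ⋙ B).sections, ∃! x : B.obj (op (c i).pt),
      ∀ k : (K i)ᵒᵖ, B.map (((c i).ι.app k.unop).op) x = s k)

/-- an embedding of the closure into the universe type. -/
noncomputable def closEmb : (Σ x : Cᵒᵖ, (ClosF A B h hB).obj x) ↪ (bigK C ι K A).out :=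
  Classical.choice <| by
    rw [← Cardinal.le_def, Cardinal.mk_out]
    exact mk_closF_le A B h hB

/-- the pointwise equivalence onto the image. -/
noncomputable def closEquiv (x : Cᵒᵖ) :
    (ClosF A B h hB).obj x ≃
      {u : (bigK C ι K A).out // ∃ b : (ClosF A B h hB).obj x, closEmb A B h hB ⟨x, b⟩ = u} where
  toFun b := ⟨closEmb A B h hB ⟨x, b⟩, b, rfl⟩
  invFun u := u.2.choose
  left_inv b := by
    have hspec := (⟨closEmb A B h hB ⟨x, b⟩, b, rfl⟩ :
      {u : (bigK C ι K A).out // ∃ b : (ClosF A B h hB).obj x,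
        closEmb A B h hB ⟨x, b⟩ = u}).2.choose_spec
    exact sigma_mk_injective ((closEmb A B h hB).injective hspec)
  right_inv u := Subtype.ext u.2.choose_spec

/-- the index datum attached to `(B, h)`. -/
noncomputable def solIndexOf : SolIndex C ι K A where
  so x := {u : (bigK C ι K A).out | ∃ b : (ClosF A B h hB).obj x, closEmb A B h hB ⟨x, b⟩ = u}
  sm x y f := (closEquiv A B h hB y) ∘ (ClosF A B h hB).map f ∘ (closEquiv A B h hB x).symm
  sm_id x := by
    funext u
    simp [CategoryTheory.Functor.map_id]
  sm_comp x y z f g := by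
    funext u
    simp [CategoryTheory.Functor.map_comp]
  tapp x := (closEquiv A B h hB x) ∘ (toClos A B h hB).app x
  tnat x y f a := by
    simp only [Function.comp_apply, Equiv.symm_apply_apply]
    exact congrArg (closEquiv A B h hB y)
      (ConcreteCategory.congr_hom ((toClos A B h hB).naturality f) a).symm

/-- the functor of the index datum is isomorphic to the closure presheaf. -/
noncomputable def solIndexIso :
    (solIndexOf A B h hB).toFunctor ≅ ClosF A B h hB :=
  NatIso.ofComponents (fun x => ((closEquiv A B h hB x).symm.toIso)) (by
    intro x y f
    refine ConcreteCategory.hom_ext _ _ fun u => ?_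
    show (closEquiv A B h hB y).symm ((closEquiv A B h hB y)
      ((ClosF A B h hB).map f ((closEquiv A B h hB x).symm u))) = _
    rw [Equiv.symm_apply_apply]
    rfl)

theorem solIndexOf_fac :
    (solIndexOf A B h hB).toHom ≫ ((solIndexIso A B h hB).hom ≫ fromClos A B h hB) = h := by
  ext x a
  show (fromClos A B h hB).app x ((closEquiv A B h hB x).symm
    ((closEquiv A B h hB x) ((toClos A B h hB).app x a))) = h.app x a
  rw [Equiv.symm_apply_apply]
  rfl
end Construct

/-- let `C` be a small category (enriched in the locally
presentable cartesian closed category of types) and let `F` be a class of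
colimits in `C`, given by a family of colimit cocones `c i` over diagrams
`D i : K i ⥤ C`.  Then the full subcategory `C̄ = [Cᵒᵖ, Type]_F` of presheaves
sending each cocone `c i` to a limit cone is reflective in the presheaf
category `[Cᵒᵖ, Type]`: the inclusion has a left adjoint.  Consequently `C̄`
is complete and cocomplete. -/
theorem limit_preserving_presheaves_reflective
    (C : Type u) [SmallCategory C]
    (ι : Type u) (K : ι → Type u) [∀ i, SmallCategory (K i)]
    (D : ∀ i, K i ⥤ C) (c : ∀ i, Cocone (D i)) (hc : ∀ i, IsColimit (c i)) :
    let Pred : (Cᵒᵖ ⥤ Type u) → Prop :=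
      fun P => ∀ i, Nonempty (IsLimit (P.mapCone (c i).op))
    Nonempty (Reflective (ObjectProperty.ι Pred)) ∧
    Nonempty (HasLimits (ObjectProperty.FullSubcategory Pred)) ∧
    Nonempty (HasColimits (ObjectProperty.FullSubcategory Pred)) := by
  intro Pred
  have hclosed : ∀ (J : Type u) [SmallCategory J], ObjectProperty.IsClosedUnderLimitsOfShape Pred J :=
    fun J _ => my_closed (D := D) (c := c) J
  haveI hLim : HasLimits (ObjectProperty.FullSubcategory Pred) :=
    { has_limits_of_shape := fun J _ => by haveI := hclosed J; infer_instance }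
  haveI hCreates : ∀ (J : Type u) [SmallCategory J],
      CreatesLimitsOfShape J (ObjectProperty.ι Pred) :=
    fun J _ => by haveI := hclosed J; infer_instance
  haveI hPres : PreservesLimits (ObjectProperty.ι Pred) :=
    { preservesLimitsOfShape := fun {J} _ => inferInstance }
  have hssc : SolutionSetCondition (ObjectProperty.ι Pred) := by
    intro A
    refine ⟨{q : SolIndex C ι K A // Pred q.toFunctor},
      fun q => ⟨q.1.toFunctor, q.2⟩, fun q => q.1.toHom, ?_⟩
    intro X f
    have hBp := (my_pred_iff (D := D) (c := c) X.obj).1 X.property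
    have hClosPred : Pred (ClosF A X.obj f hBp) :=
      (my_pred_iff (D := D) (c := c) _).2 (closF_pred A X.obj f hBp)
    have hQPred : Pred (solIndexOf A X.obj f hBp).toFunctor := fun i =>
      (hClosPred i).map (fun hl =>
        IsLimit.mapConeEquiv (solIndexIso A X.obj f hBp).symm hl)
    refine ⟨⟨solIndexOf A X.obj f hBp, hQPred⟩,
      ObjectProperty.homMk ((solIndexIso A X.obj f hBp).hom ≫ fromClos A X.obj f hBp), ?_⟩
    exact solIndexOf_fac A X.obj f hBp
  haveI hra : (ObjectProperty.ι Pred).IsRightAdjoint :=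
    isRightAdjoint_of_preservesLimits_of_solutionSetCondition (G := ObjectProperty.ι Pred) hssc
  haveI hrefl : Reflective (ObjectProperty.ι Pred) :=
    { L := (ObjectProperty.ι Pred).leftAdjoint
      adj := Adjunction.ofIsRightAdjoint _ }
  refine ⟨⟨hrefl⟩, ⟨hLim⟩, ⟨?_⟩⟩
  exact hasColimits_of_reflective (ObjectProperty.ι Pred)
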